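/- The converse inclusion of the rule-application soundness theorem fails: there exist a bounded atomistic lattice Λ, a lattice automaton A over Λ, and a rewriting rule R over Λ whose rewriting functions are monotone and map atoms to atoms, such that 𝓛(ApplyRule(R, A)) ⊄ R(𝓛(A)). (For instance, over the lattice of integer intervals one may take A with a single transition labeled [0,1], so that 𝓛(A) = {[0,0], [1,1]}, and the rule with guard a single letter ⊤ and rewriting functions f₁(x) = 2x and f₂(x) = 4x: then R(𝓛(A)) = {[0,0]·[0,0], [2,2]·[4,4]} while 𝓛(ApplyRule(R, A)) also contains the cross words [0,0]·[4,4] and [2,2]·[0,0].) -/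

import Mathlib

/-- A lattice automaton over a lattice `Λ`: a set of initial states, a set of
final states, and a transition relation labeled by lattice elements. -/
structure LatAuto (Q Λ : Type*) where
  init : Set Q
  final : Set Q
  trans : Set (Q × Λ × Q)

/-- A path `q →^{λ₁⋯λ_m} q'` in a lattice automaton. -/
inductive LatAuto.Path {Q Λ : Type*} (A : LatAuto Q Λ) : Q → List Λ → Q → Prop
  | nil (q : Q) : LatAuto.Path A q [] q
  | cons {q p q' : Q} {a : Λ} {ls : List Λ} :
      (q, a, p) ∈ A.trans → LatAuto.Path A p ls q' → LatAuto.Path A q (a :: ls) q'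

/-- Pointwise order on words over `Λ`: same length and letterwise `≤`. -/
def WordLE {Λ : Type*} [LE Λ] (u v : List Λ) : Prop :=
  List.Forall₂ (· ≤ ·) u v

/-- The language of a lattice automaton: words of atoms that are letterwise
below the labels of some accepting path. -/
def LatAuto.Lang {Q Λ : Type*} [Preorder Λ] [OrderBot Λ] (A : LatAuto Q Λ) :
    Set (List Λ) :=
  {w | (∀ a ∈ w, IsAtom a) ∧
    ∃ q0 ∈ A.init, ∃ qf ∈ A.final, ∃ ls, A.Path q0 ls qf ∧ WordLE w ls}

/-- A rewriting rule over `Λ`, with guard `(g 0)⋆ · w 0 · (g 1)⋆ · w 1 ⋯ w (n-1) · (g n)⋆`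
(the words `w i`, `i < n`, are nonempty) and rewriting functions
`f 0 · h 0 · f 1 · h 1 ⋯ h n · f (n+1)`; the functions `f i : Λ^N → Λ*` and
`h i : Λ × Λ^N → Λ` receive the concatenation of the matched sub-words as a list. -/
structure RewRule (Λ : Type*) where
  n : ℕ
  g : ℕ → Λ
  w : ℕ → List Λ
  w_ne : ∀ i < n, w i ≠ []
  f : ℕ → List Λ → List Λ
  h : ℕ → Λ → List Λ → Λ

/-- `interleave n u v = u 0 ++ v 0 ++ u 1 ++ v 1 ++ ⋯ ++ v (n-1) ++ u n`. -/
def interleave {Λ : Type*} (n : ℕ) (u v : ℕ → List Λ) : List Λ :=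
  u 0 ++ ((List.range n).map fun i => v i ++ u (i + 1)).flatten

/-- Concatenation `v 0 ++ ⋯ ++ v (n-1)` of the matched sub-words. -/
def matchedVals {Λ : Type*} (n : ℕ) (v : ℕ → List Λ) : List Λ :=
  ((List.range n).map v).flatten

/-- The output word `v₀' · u₀' · v₁' · u₁' ⋯ vₙ' · uₙ' · v_{n+1}'` of a rewriting
rule on the decomposition `u, v`, where `v_i' = f i (v 0 ⋯ v (n-1))` and `u_i'`
replaces each letter `a` of `u i` by `h i a (v 0 ⋯ v (n-1))`. -/
def rewOutput {Λ : Type*} (R : RewRule Λ) (u v : ℕ → List Λ) : List Λ :=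
  R.f 0 (matchedVals R.n v) ++ (u 0).map (fun a => R.h 0 a (matchedVals R.n v)) ++
    ((List.range R.n).map fun i =>
      R.f (i + 1) (matchedVals R.n v) ++
        (u (i + 1)).map fun a => R.h (i + 1) a (matchedVals R.n v)).flatten ++
    R.f (R.n + 1) (matchedVals R.n v)

/-- `x` rewrites to `y` under the rule `R`: `x` decomposes as
`u 0 · v 0 · u 1 ⋯ v (n-1) · u n` with every letter of `u i` below `g i` and
`v i ⊑ w i`, and `y` is the corresponding output word. -/
def Rewrites {Λ : Type*} [Lattice Λ] (R : RewRule Λ) (x y : List Λ) : Prop :=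
  ∃ u v : ℕ → List Λ,
    x = interleave R.n u v ∧
    (∀ i ≤ R.n, ∀ a ∈ u i, a ≤ R.g i) ∧
    (∀ i < R.n, WordLE (v i) (R.w i)) ∧
    y = rewOutput R u v

/-- `R(L)`: the set of words obtained by rewriting a word of `L` under `R`. -/
def RewRule.image {Λ : Type*} [Lattice Λ] (R : RewRule Λ) (L : Set (List Λ)) :
    Set (List Λ) :=
  {y | ∃ x ∈ L, Rewrites R x y}

/-- The rewriting functions of `R` are monotone and map tuples of atoms to
words of atoms (for the `f i`), respectively to atoms (for the `h i`). -/
def RuleOK {Λ : Type*} [Lattice Λ] [OrderBot Λ] (R : RewRule Λ) : Prop :=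
  (∀ i ≤ R.n + 1, ∀ V V', WordLE V V' → WordLE (R.f i V) (R.f i V')) ∧
  (∀ i ≤ R.n + 1, ∀ V, (∀ a ∈ V, IsAtom a) → ∀ a ∈ R.f i V, IsAtom a) ∧
  (∀ i ≤ R.n, ∀ x x' V V', x ≤ x' → WordLE V V' → R.h i x V ≤ R.h i x' V') ∧
  (∀ i ≤ R.n, ∀ x V, IsAtom x → (∀ a ∈ V, IsAtom a) → IsAtom (R.h i x V))

/-- `matches(w, A)`: triples `(q_b, v, q_e)` such that `A` has a path from `q_b`
to `q_e` with labels `λ'` and `v = w ⊓ λ'` letterwise, all letters of `v`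
being different from `⊥`. -/
def MatchesSet {Q Λ : Type*} [Lattice Λ] [OrderBot Λ] (A : LatAuto Q Λ)
    (w : List Λ) : Set (Q × List Λ × Q) :=
  {t | ∃ ls, A.Path t.1 ls t.2.2 ∧ ls.length = w.length ∧
    t.2.1 = List.zipWith (· ⊓ ·) w ls ∧ ∀ x ∈ t.2.1, x ≠ (⊥ : Λ)}

/-- A choice of data for the `ApplyRule` algorithm: an initial state `q0`, a
final state `qf`, and a matching sequence `(mb i, mv i, me i) ∈ matches(w i, A)`
for each guard word `w i`, `i < n`. -/
structure RuleChoice {Q Λ : Type*} [Lattice Λ] [OrderBot Λ] (R : RewRule Λ)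
    (A : LatAuto Q Λ) where
  q0 : Q
  qf : Q
  hq0 : q0 ∈ A.init
  hqf : qf ∈ A.final
  mb : ℕ → Q
  mv : ℕ → List Λ
  me : ℕ → Q
  hm : ∀ i < R.n, (mb i, mv i, me i) ∈ MatchesSet A (R.w i)

/-- States of the automaton built by `ApplyRule`, before identification: states
of `A`, the two fresh states `q₋₁` (`Sum.inr (Sum.inl false)`) and `q_{n+1}`
(`Sum.inr (Sum.inl true)`), and the intermediate states of the fresh chains. -/
abbrev BaseSt (Q : Type*) := Q ⊕ (Bool ⊕ ℕ × ℕ)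

section ApplyRule

variable {Q Λ : Type*} [Lattice Λ] [OrderBot Λ]

/-- Concatenation `v^1 ⋯ v^n` of the matched values of a choice. -/
def choiceV (R : RewRule Λ) (A : LatAuto Q Λ) (c : RuleChoice R A) : List Λ :=
  matchedVals R.n c.mv

/-- The word `w_i' = f i (v^1, …, v^n)` labeling the `i`-th fresh chain. -/
def choiceOut (R : RewRule Λ) (A : LatAuto Q Λ) (c : RuleChoice R A) (i : ℕ) :
    List Λ :=
  R.f i (choiceV R A c)

/-- Source of the `i`-th fresh chain: `q₋₁` for `i = 0`, `q_b^i` for `1 ≤ i ≤ n`,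
and `q_f` for `i = n + 1`. -/
def chainSrc (R : RewRule Λ) (A : LatAuto Q Λ) (c : RuleChoice R A) (i : ℕ) :
    BaseSt Q :=
  if i = 0 then Sum.inr (Sum.inl false)
  else if i ≤ R.n then Sum.inl (c.mb (i - 1))
  else Sum.inl c.qf

/-- Target of the `i`-th fresh chain: `q₀` for `i = 0`, `q_e^i` for `1 ≤ i ≤ n`,
and `q_{n+1}` for `i = n + 1`. -/
def chainDst (R : RewRule Λ) (A : LatAuto Q Λ) (c : RuleChoice R A) (i : ℕ) :
    BaseSt Q :=
  if i = 0 then Sum.inl c.q0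
  else if i ≤ R.n then Sum.inl (c.me (i - 1))
  else Sum.inr (Sum.inl true)

/-- The `j`-th node of the `i`-th fresh chain. -/
def chainNode (R : RewRule Λ) (A : LatAuto Q Λ) (c : RuleChoice R A) (i j : ℕ) :
    BaseSt Q :=
  if j = 0 then chainSrc R A c i
  else if j = (choiceOut R A c i).length then chainDst R A c i
  else Sum.inr (Sum.inr (i, j))

/-- The transitions `δ^{seq}` of the fresh chains, labeled by the successive
letters of the words `w_i'`. -/
def seqTrans (R : RewRule Λ) (A : LatAuto Q Λ) (c : RuleChoice R A) :
    Set (BaseSt Q × Λ × BaseSt Q) :=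
  {t | ∃ i ≤ R.n + 1, ∃ j : ℕ, ∃ hj : j < (choiceOut R A c i).length,
    t = (chainNode R A c i j, (choiceOut R A c i).get ⟨j, hj⟩,
         chainNode R A c i (j + 1))}

/-- The transitions of the rewritten copies `A_i'` of `A`: every transition
label `a` of `A` is replaced by `h i (g i ⊓ a) (v^1, …, v^n)`, transitions
whose label meets `g i` at `⊥` or is rewritten to `⊥` being deleted. -/
def subTrans (R : RewRule Λ) (A : LatAuto Q Λ) (c : RuleChoice R A) :
    Set (BaseSt Q × Λ × BaseSt Q) :=
  {t | ∃ i ≤ R.n, ∃ q a q', (q, a, q') ∈ A.trans ∧ R.g i ⊓ a ≠ ⊥ ∧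
    R.h i (R.g i ⊓ a) (choiceV R A c) ≠ ⊥ ∧
    t = (Sum.inl q, R.h i (R.g i ⊓ a) (choiceV R A c), Sum.inl q')}

/-- Identification of the endpoints of a fresh chain whose labeling word is
empty. -/
def identRel (R : RewRule Λ) (A : LatAuto Q Λ) (c : RuleChoice R A)
    (x y : BaseSt Q) : Prop :=
  ∃ i ≤ R.n + 1, choiceOut R A c i = [] ∧
    x = chainSrc R A c i ∧ y = chainDst R A c i

/-- The automaton `A'` built by the `ApplyRule` algorithm for one choice of
matching sequences and initial/final states: the rewritten copies of `A`
together with the fresh chains, from the fresh initial state `q₋₁` to the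
fresh final state `q_{n+1}`, endpoints of empty chains being identified. -/
def singleAuto (R : RewRule Λ) (A : LatAuto Q Λ) (c : RuleChoice R A) :
    LatAuto (Quot (identRel R A c)) Λ where
  init := {Quot.mk _ (Sum.inr (Sum.inl false))}
  final := {Quot.mk _ (Sum.inr (Sum.inl true))}
  trans := {t | ∃ x a y, ((x, a, y) ∈ seqTrans R A c ∨ (x, a, y) ∈ subTrans R A c) ∧
    t = (Quot.mk _ x, a, Quot.mk _ y)}

/-- `ApplyRule(R, A)`: the union, over all choices of matching sequences and
initial/final states, of the automata `A'`. -/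
def ApplyRule (R : RewRule Λ) (A : LatAuto Q Λ) :
    LatAuto (Σ c : RuleChoice R A, Quot (identRel R A c)) Λ where
  init := {s | s.2 ∈ (singleAuto R A s.1).init}
  final := {s | s.2 ∈ (singleAuto R A s.1).final}
  trans := {t | ∃ (c : RuleChoice R A) (x y : Quot (identRel R A c)) (a : Λ),
    (x, a, y) ∈ (singleAuto R A c).trans ∧ t = (⟨c, x⟩, a, ⟨c, y⟩)}

end ApplyRule

/-- The data of a counterexample to the converse inclusion: `Λ` is atomistic,
the rewriting functions of `R` are monotone and map (tuples of) atoms to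
atoms, but `𝓛(ApplyRule(R, A)) ⊄ R(𝓛(A))`. -/
def RuleCounterexample (Λ : Type) [CompleteLattice Λ] (Q : Type)
    (A : LatAuto Q Λ) (R : RewRule Λ) : Prop :=
  IsAtomistic Λ ∧ RuleOK R ∧ ¬ (ApplyRule R A).Lang ⊆ R.image A.Lang

/-! ### The counterexample -/

def exA : LatAuto Unit (Set Bool) where
  init := Set.univ
  final := Set.univ
  trans := {((), (⊤ : Set Bool), ())}

def exR : RewRule (Set Bool) where
  n := 1
  g := fun _ => ⊥
  w := fun _ => [⊤]
  w_ne := fun _ _ => by simp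
  f := fun i V => if i = 1 then V ++ V else []
  h := fun _ _ _ => {false}

def exC : RuleChoice exR exA where
  q0 := ()
  qf := ()
  hq0 := Set.mem_univ _
  hqf := Set.mem_univ _
  mb := fun _ => ()
  mv := fun _ => [⊤]
  me := fun _ => ()
  hm := fun i _ => ⟨[⊤],
    LatAuto.Path.cons rfl (LatAuto.Path.nil _),
    rfl,
    by show [(⊤ : Set Bool)] = List.zipWith (· ⊓ ·) [⊤] [⊤]; simp,
    by intro x hx; simp only [List.mem_singleton] at hx; subst hx; exact top_ne_bot⟩

lemma choiceV_exC : choiceV exR exA exC = [⊤] := rfl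

lemma choiceOut0 : choiceOut exR exA exC 0 = [] := rfl
lemma choiceOut1 : choiceOut exR exA exC 1 = [⊤, ⊤] := rfl
lemma choiceOut2 : choiceOut exR exA exC 2 = [] := rfl

lemma quot1 : Quot.mk (identRel exR exA exC) (Sum.inr (Sum.inl false)) =
    Quot.mk _ (Sum.inl ()) :=
  Quot.sound ⟨0, by omega, choiceOut0, rfl, rfl⟩

lemma quot2 : Quot.mk (identRel exR exA exC) (Sum.inl ()) =
    Quot.mk _ (Sum.inr (Sum.inl true)) :=
  Quot.sound ⟨2, by simp [exR], choiceOut2, rfl, rfl⟩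

lemma mem1 : ((Sum.inl () : BaseSt Unit), (⊤ : Set Bool),
    (Sum.inr (Sum.inr (1, 1)) : BaseSt Unit)) ∈ seqTrans exR exA exC :=
  ⟨1, by simp [exR], 0, by rw [choiceOut1]; simp, rfl⟩

lemma mem2 : ((Sum.inr (Sum.inr (1, 1)) : BaseSt Unit), (⊤ : Set Bool),
    (Sum.inl () : BaseSt Unit)) ∈ seqTrans exR exA exC :=
  ⟨1, by simp [exR], 1, by rw [choiceOut1]; simp, rfl⟩

lemma exR_ok : RuleOK exR := by
  refine ⟨?_, ?_, ?_, ?_⟩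
  · intro i _ V V' h
    show WordLE (if i = 1 then V ++ V else []) (if i = 1 then V' ++ V' else [])
    split
    · exact List.rel_append h h
    · exact List.Forall₂.nil
  · intro i _ V hV a ha
    have ha' : a ∈ (if i = 1 then V ++ V else []) := ha
    split at ha'
    · rcases List.mem_append.mp ha' with h | h <;> exact hV a h
    · exact absurd ha' List.not_mem_nil
  · intro i _ x x' V V' _ _
    exact le_refl _
  · intro i _ x V _ _
    exact Set.isAtom_singleton false

lemma exWord_mem : [({false} : Set Bool), {true}] ∈ (ApplyRule exR exA).Lang := by
  refine ⟨?_, ⟨exC, Quot.mk _ (Sum.inr (Sum.inl false))⟩, rfl,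
    ⟨exC, Quot.mk _ (Sum.inr (Sum.inl true))⟩, rfl, [⊤, ⊤], ?_, ?_⟩
  · intro a ha
    simp only [List.mem_cons, List.not_mem_nil, or_false] at ha
    rcases ha with rfl | rfl
    · exact Set.isAtom_singleton false
    · exact Set.isAtom_singleton true
  · have e1 : (⟨exC, Quot.mk _ (Sum.inr (Sum.inl false))⟩ :
        Σ c : RuleChoice exR exA, Quot (identRel exR exA c)) =
        ⟨exC, Quot.mk _ (Sum.inl ())⟩ := congrArg _ quot1
    have e2 : (⟨exC, Quot.mk _ (Sum.inl ())⟩ :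
        Σ c : RuleChoice exR exA, Quot (identRel exR exA c)) =
        ⟨exC, Quot.mk _ (Sum.inr (Sum.inl true))⟩ := congrArg _ quot2
    rw [e1, ← e2]
    exact LatAuto.Path.cons ⟨exC, _, _, ⊤, ⟨_, ⊤, _, Or.inl mem1, rfl⟩, rfl⟩
      (LatAuto.Path.cons ⟨exC, _, _, ⊤, ⟨_, ⊤, _, Or.inl mem2, rfl⟩, rfl⟩
        (LatAuto.Path.nil _))
  · exact List.Forall₂.cons le_top (List.Forall₂.cons le_top List.Forall₂.nil)

lemma exWord_not_mem : [({false} : Set Bool), {true}] ∉ exR.image exA.Lang := by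
  rintro ⟨x, ⟨hat, -⟩, u, v, hx, hu, hv, hy⟩
  have hx' : x = u 0 ++ (v 0 ++ u 1) := by
    rw [hx]; simp [interleave, exR, List.range_succ, List.range_zero]
  have hu' : ∀ i ≤ 1, u i = [] := by
    intro i hi
    rw [List.eq_nil_iff_forall_not_mem]
    intro a ha
    have hax : a ∈ x := by
      rw [hx']
      interval_cases i
      · exact List.mem_append_left _ ha
      · exact List.mem_append_right _ (List.mem_append_right _ ha)
    exact (hat a hax).1 (le_bot_iff.mp (hu i hi a ha))
  have hv0 : List.Forall₂ (· ≤ ·) (v 0) [(⊤ : Set Bool)] := hv 0 Nat.one_pos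
  rw [List.forall₂_cons_right_iff] at hv0
  obtain ⟨a, l, -, hl, hv0eq⟩ := hv0
  rw [List.forall₂_nil_right_iff] at hl
  subst hl
  have hro : rewOutput exR u v = v 0 ++ v 0 := by
    simp [rewOutput, matchedVals, exR, List.range_succ, List.range_zero, hu' 0 (by norm_num), hu' 1 (by norm_num)]
  rw [hro, hv0eq] at hy
  simp only [List.cons_append, List.nil_append, List.cons.injEq, and_true] at hy
  obtain ⟨h1, h2⟩ := hy
  have : ({false} : Set Bool) = {true} := h1.trans h2.symm
  simp at this


/-- **The converse of the `ApplyRule` soundness theorem fails**: there exist a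
bounded (complete) atomistic lattice `Λ`, a lattice automaton `A` over `Λ` and
a rewriting rule `R` over `Λ` with monotone, atom-preserving rewriting
functions such that `𝓛(ApplyRule(R, A)) ⊄ R(𝓛(A))`. -/
theorem applyRule_not_complete :
    ∃ (Λ : Type) (inst : CompleteLattice Λ) (Q : Type) (A : LatAuto Q Λ)
      (R : RewRule Λ), @RuleCounterexample Λ inst Q A R :=
  ⟨Set Bool, inferInstance, Unit, exA, exR, inferInstance, exR_ok,
    fun hsub => exWord_not_mem (hsub exWord_mem)⟩
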